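/- For every integer n ≥ 2 there exists a permutation f of F_3^n such that 1-affinity(f) = 0, i.e., no 1-flat (line) of F_3^n is mapped by f onto a 1-flat. -/
import Mathlib

set_option linter.unusedSectionVars false

/-- A `k`-flat in an `F`-vector space `V`: a coset of a `k`-dimensional `F`-subspace. -/
def IsFlat (F : Type*) {V : Type*} [Field F] [AddCommGroup V] [Module F V]
    (k : ℕ) (X : Set V) : Prop :=
  ∃ (U : Submodule F V) (x : V), Module.finrank F U = k ∧ X = (fun u => u + x) '' (U : Set V)

/-- The `k`-affinity of a map `f : V → V`: the number of `k`-flats `X` of `V`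
such that `f(X)` is also a `k`-flat. -/
noncomputable def affinity (F : Type*) {V : Type*} [Field F] [AddCommGroup V] [Module F V]
    (k : ℕ) (f : V → V) : ℕ :=
  {X : Set V | IsFlat F k X ∧ IsFlat F k (f '' X)}.ncard

/-- The `k`-coaffinity of a map `f : V → V`: the number of `k`-flats `X` of `V`
such that `f(X)` is not a `k`-flat. -/
noncomputable def coaffinity (F : Type*) {V : Type*} [Field F] [AddCommGroup V] [Module F V]
    (k : ℕ) (f : V → V) : ℕ :=
  {X : Set V | IsFlat F k X ∧ ¬ IsFlat F k (f '' X)}.ncard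

section Infra
variable {V : Type*} [AddCommGroup V] [Module (ZMod 3) V]

/-- `f` sends no zero-sum triple of distinct points to a zero-sum triple. -/
def GoodP (f : V → V) : Prop :=
  ∀ a b c : V, a ≠ b → a + b + c = 0 → f a + f b + f c ≠ 0

lemma three_zero (x : V) : x + x + x = 0 := by
  have h : ((3 : ℕ) : ZMod 3) • x = (3 : ℕ) • x := Nat.cast_smul_eq_nsmul _ _ _
  have h2 : ((3 : ℕ) : ZMod 3) = 0 := by decide
  have h3 : (3 : ℕ) • x = x + x + x := by rw [succ_nsmul, two_nsmul]
  rw [← h3, ← h, h2, zero_smul]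

lemma eq_of_two {a c : V} (h : a + a + c = 0) : c = a := by
  have h1 := three_zero a
  have : a + a + c = a + a + a := by rw [h, h1]
  exact add_left_cancel this

lemma goodP_iff (f : V → V) :
    GoodP f ↔ ∀ a b : V, a ≠ b → f a + f b + f (-(a + b)) ≠ 0 := by
  constructor
  · intro h a b hab
    exact h a b (-(a + b)) hab (by abel)
  · intro h a b c hab hsum
    have hc : c = -(a + b) := (add_eq_zero_iff_neg_eq.mp hsum).symm
    rw [hc]; exact h a b hab

lemma goodP_congr {f g : V → V} (h : ∀ x, f x = g x) (hg : GoodP g) : GoodP f := by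
  intro a b c h1 h2
  rw [h a, h b, h c]
  exact hg a b c h1 h2

variable {W : Type*} [AddCommGroup W] [Module (ZMod 3) W]

lemma goodP_prodMap {f : V → V} {g : W → W} (hf : GoodP f) (hg : GoodP g) :
    GoodP (Prod.map f g) := by
  rintro ⟨a1, a2⟩ ⟨b1, b2⟩ ⟨c1, c2⟩ hab hsum
  rw [Prod.mk_add_mk, Prod.mk_add_mk, Prod.mk_eq_zero] at hsum
  obtain ⟨h1, h2⟩ := hsum
  simp only [Prod.map_apply, Prod.mk_add_mk, ne_eq, Prod.mk_eq_zero, not_and]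
  by_cases hab1 : a1 = b1
  · subst hab1
    have hc1 : c1 = a1 := eq_of_two h1
    have hab2 : a2 ≠ b2 := fun h => hab (by rw [h])
    intro _
    exact hg a2 b2 c2 hab2 h2
  · intro hfirst
    exact absurd hfirst (hf a1 b1 c1 hab1 h1)

/-- transport along an additive equivalence -/
lemma goodP_addEquiv {f : V → V} (hf : GoodP f) (e : V ≃+ W) :
    GoodP (⇑e ∘ f ∘ ⇑e.symm) := by
  intro a b c hab hsum
  have h1 : e.symm a ≠ e.symm b := fun h => hab (by simpa using congrArg e h)
  have h2 : e.symm a + e.symm b + e.symm c = 0 := by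
    rw [← map_add, ← map_add, hsum, map_zero]
  have h3 := hf _ _ _ h1 h2
  simp only [Function.comp_apply]
  intro h
  apply h3
  have h4 : e (f (e.symm a) + f (e.symm b) + f (e.symm c)) = 0 := by
    rw [map_add, map_add]; exact h
  exact e.injective (by rw [h4, map_zero])

lemma flat_one {X : Set V} (h : IsFlat (ZMod 3) 1 X) :
    ∃ a b c : V, a ≠ b ∧ a ≠ c ∧ b ≠ c ∧ a + b + c = 0 ∧ X = {a, b, c} := by
  obtain ⟨U, x, hU, hX⟩ := h
  obtain ⟨v, hv0, hvspan⟩ := finrank_eq_one_iff'.mp hU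
  set u : V := (v : V) with hu
  have hu0 : u ≠ 0 := fun h => hv0 (Subtype.ext h)
  have hUset : (U : Set V) = {0, u, -u} := by
    ext y
    constructor
    · intro hy
      obtain ⟨c, hc⟩ := hvspan ⟨y, hy⟩
      have hc' : c • u = y := congrArg Subtype.val hc
      have hall : ∀ d : ZMod 3, d = 0 ∨ d = 1 ∨ d = 2 := by decide
      rcases hall c with rfl | rfl | rfl
      · left; rw [← hc', zero_smul]
      · right; left; rw [← hc', one_smul]
      · right; right
        rw [← hc', show (2 : ZMod 3) = -1 by decide, neg_smul, one_smul]
        exact rfl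
    · rintro (rfl | rfl | rfl)
      · exact U.zero_mem
      · exact v.2
      · exact U.neg_mem v.2
  refine ⟨x, u + x, -u + x, ?_, ?_, ?_, ?_, ?_⟩
  · intro h
    apply hu0
    have : u + x = 0 + x := by rw [← h, zero_add]
    exact add_right_cancel this
  · intro h
    apply hu0
    have : -u + x = 0 + x := by rw [← h, zero_add]
    rw [← neg_eq_zero]
    exact add_right_cancel this
  · intro h
    apply hu0
    have h1 : u = -u := add_right_cancel h
    have h2 : u + u = 0 := eq_neg_iff_add_eq_zero.mp h1
    have h3 := three_zero u
    rw [h2, zero_add] at h3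
    exact h3
  · have h1 : x + (u + x) + (-u + x) = x + x + x := by abel
    rw [h1]; exact three_zero x
  · rw [hX, hUset]
    simp [Set.image_insert_eq]

lemma affinity_zero_of_goodP (f : Equiv.Perm V) (hf : GoodP ⇑f) :
    affinity (ZMod 3) 1 (⇑f) = 0 := by
  classical
  have hset : {X : Set V | IsFlat (ZMod 3) 1 X ∧ IsFlat (ZMod 3) 1 (⇑f '' X)} = ∅ := by
    ext X
    simp only [Set.mem_setOf_eq, Set.mem_empty_iff_false, iff_false, not_and]
    intro h1 h2
    obtain ⟨a, b, c, hab, hac, hbc, hsum, hXeq⟩ := flat_one h1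
    obtain ⟨a', b', c', hab', hac', hbc', hsum', hYeq⟩ := flat_one h2
    rw [hXeq] at hYeq
    have himg : (⇑f '' ({a, b, c} : Set V)) = {f a, f b, f c} := by
      simp [Set.image_insert_eq]
    rw [himg] at hYeq
    have hfab : f a ≠ f b := fun h => hab (f.injective h)
    have hfac : f a ≠ f c := fun h => hac (f.injective h)
    have hfbc : f b ≠ f c := fun h => hbc (f.injective h)
    have hst : ({f a, f b, f c} : Finset V) = {a', b', c'} := by
      apply Finset.coe_injective
      push_cast
      exact hYeq
    have hs : ∑ x ∈ ({f a, f b, f c} : Finset V), x = f a + f b + f c := by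
      rw [Finset.sum_insert (by simp [hfab, hfac]),
        Finset.sum_insert (by simp [hfbc]), Finset.sum_singleton, ← add_assoc]
    have ht : ∑ x ∈ ({a', b', c'} : Finset V), x = a' + b' + c' := by
      rw [Finset.sum_insert (by simp [hab', hac']),
        Finset.sum_insert (by simp [hbc']), Finset.sum_singleton, ← add_assoc]
    apply hf a b c hab hsum
    rw [← hs, hst, ht, hsum']
  rw [affinity, hset, Set.ncard_empty]

end Infra

/-- split a function space over `Fin (a+b)` additively -/
def splitAddEquiv (a b : ℕ) (M : Type*) [AddCommGroup M] :
    (Fin (a + b) → M) ≃+ (Fin a → M) × (Fin b → M) where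
  toFun f := (fun i => f (Fin.castAdd b i), fun j => f (Fin.natAdd a j))
  invFun p := Fin.addCases p.1 p.2
  left_inv f := by
    funext i
    refine Fin.addCases (fun i => ?_) (fun j => ?_) i
    · simp only []
      rw [Fin.addCases_left]
    · simp only []
      rw [Fin.addCases_right]
  right_inv p := by
    refine Prod.ext ?_ ?_ <;> funext i <;> simp
  map_add' f g := rfl

abbrev V2 := Fin 2 → ZMod 3
abbrev V3 := Fin 3 → ZMod 3

def tbl2 : Fin 9 → Fin 9 := ![0, 1, 3, 2, 4, 7, 6, 8, 5]

def tbl3 : Fin 27 → Fin 27 :=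
  ![13, 25, 11, 10, 22, 1, 5, 3, 19, 16, 9, 26, 23, 4, 24, 21, 6, 12, 20, 14, 15, 17, 8, 2, 7,
    18, 0]

def enc2 (v : V2) : Fin 9 :=
  ⟨(v 0).val + 3 * (v 1).val, by
    have h0 := ZMod.val_lt (v 0); have h1 := ZMod.val_lt (v 1); omega⟩

def dec2 (k : Fin 9) : V2 := ![((k : ℕ) % 3 : ℕ), ((k : ℕ) / 3 : ℕ)]

def f2 : V2 → V2 := fun v => dec2 (tbl2 (enc2 v))

def enc3 (v : V3) : Fin 27 :=
  ⟨(v 0).val + 3 * (v 1).val + 9 * (v 2).val, by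
    have h0 := ZMod.val_lt (v 0); have h1 := ZMod.val_lt (v 1)
    have h2 := ZMod.val_lt (v 2); omega⟩

def dec3 (k : Fin 27) : V3 :=
  ![((k : ℕ) % 3 : ℕ), ((k : ℕ) / 3 % 3 : ℕ), ((k : ℕ) / 9 : ℕ)]

def f3 : V3 → V3 := fun v => dec3 (tbl3 (enc3 v))

noncomputable def p2 : Equiv.Perm V2 := Equiv.ofBijective f2 (by decide)
noncomputable def p3 : Equiv.Perm V3 := Equiv.ofBijective f3 (by decide)

lemma goodP_p2 : GoodP ⇑p2 := by
  rw [goodP_iff]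
  have h : ∀ a b : V2, a ≠ b → f2 a + f2 b + f2 (-(a + b)) ≠ 0 := by decide
  exact h

lemma goodP_p3 : GoodP ⇑p3 := by
  rw [goodP_iff]
  have h : ∀ a b : V3, a ≠ b → f3 a + f3 b + f3 (-(a + b)) ≠ 0 := by decide
  exact h

lemma exists_goodP : ∀ m : ℕ, ∃ f : Equiv.Perm (Fin (m + 2) → ZMod 3), GoodP ⇑f := by
  intro m
  induction m using Nat.strong_induction_on with
  | _ m ih =>
    match m with
    | 0 => exact ⟨p2, goodP_p2⟩
    | 1 => exact ⟨p3, goodP_p3⟩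
    | (k + 2) =>
      obtain ⟨g, hg⟩ := ih k (by omega)
      let e : (Fin (k + 2 + 2) → ZMod 3) ≃+ (Fin (k + 2) → ZMod 3) × (Fin 2 → ZMod 3) :=
        splitAddEquiv (k + 2) 2 (ZMod 3)
      let F : Equiv.Perm ((Fin (k + 2) → ZMod 3) × (Fin 2 → ZMod 3)) := g.prodCongr p2
      refine ⟨(e.toEquiv.trans F).trans e.symm.toEquiv, ?_⟩
      have h1 : GoodP (Prod.map ⇑g ⇑p2) := goodP_prodMap hg goodP_p2
      have h2 := goodP_addEquiv h1 e.symm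
      apply goodP_congr (g := ⇑e.symm ∘ Prod.map ⇑g ⇑p2 ∘ ⇑e.symm.symm) (fun x => rfl)
      exact h2

/-- For every `n ≥ 2` there exists a permutation `f` of `𝔽₃ⁿ` with `1`-affinity `0`. -/
theorem exists_perm_one_affinity_zero_q_three (n : ℕ) (hn : 2 ≤ n) :
    ∃ f : Equiv.Perm (Fin n → ZMod 3),
      affinity (ZMod 3) 1 (⇑f : (Fin n → ZMod 3) → (Fin n → ZMod 3)) = 0 := by
  obtain ⟨m, rfl⟩ : ∃ m, n = m + 2 := ⟨n - 2, by omega⟩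
  obtain ⟨f, hf⟩ := exists_goodP m
  exact ⟨f, affinity_zero_of_goodP f hf⟩
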